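/- Take K=2 and the generalized UCB policy with f_1(n)=f_2(n)=log log n. This policy is Hannan consistent (E_θ[R_n]=o(n) for every θ∈Θ), and yet in every environment θ=(δ_a,δ_b) with 0≤b<a≤1 and Δ=a−b its expected regret satisfies E_θ[R_n] ≤ (log log n)/Δ + 1 = O(log log n). In particular, no logarithmic lower bound on expected regret holds uniformly over Θ for Hannan consistent policies. -/

import Mathlib

open MeasureTheory ProbabilityTheory Filter Asymptotics

noncomputable section

namespace Bandit

/-- Empirical mean of the first `s` values of the sequence `x`. -/
def empMean (x : ℕ → ℝ) (s : ℕ) : ℝ := (∑ u ∈ Finset.range s, x u) / s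

/-- An element of `Fin K` maximizing `g`. -/
def argmaxFin {K : ℕ} (hK : 0 < K) (g : Fin K → ℝ) : Fin K :=
  (Finset.univ.exists_max_image g ⟨⟨0, hK⟩, Finset.mem_univ _⟩).choose

theorem argmaxFin_spec {K : ℕ} (hK : 0 < K) (g : Fin K → ℝ) (j : Fin K) :
    g j ≤ g (argmaxFin hK g) := by
  have h := (Finset.univ.exists_max_image g ⟨⟨0, hK⟩, Finset.mem_univ _⟩).choose_spec
  exact h.2 j (Finset.mem_univ j)

/-- The arm pulled at round `t` by a generalized UCB policy with exploration functions `f`,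
given the reward table `x` (where `x k u` is the reward of the `(u+1)`-th pull of arm `k`)
and the vector `T` of numbers of pulls of each arm before round `t`.
During the first `K` rounds (`t ≤ K`), each arm is pulled once; afterwards an arm maximizing
the UCB index `X̂_{k,T_k(t-1)} + √(f_k(t) / T_k(t-1))` is pulled. -/
def ucbArmAux {K : ℕ} (hK : 0 < K) (f : Fin K → ℕ → ℝ) (x : Fin K → ℕ → ℝ)
    (T : Fin K → ℕ) (t : ℕ) : Fin K :=
  if h : t ≤ K then ⟨t - 1, by omega⟩
  else argmaxFin hK fun j => empMean (x j) (T j) + Real.sqrt (f j t / (T j : ℝ))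

/-- `ucbCount hK f x t k` is `T_k(t)`, the number of pulls of arm `k` during rounds `1,…,t`
by the generalized UCB policy with exploration functions `f` on the reward table `x`. -/
def ucbCount {K : ℕ} (hK : 0 < K) (f : Fin K → ℕ → ℝ) (x : Fin K → ℕ → ℝ) :
    ℕ → Fin K → ℕ
  | 0, _ => 0
  | t + 1, k =>
    ucbCount hK f x t k + if ucbArmAux hK f x (ucbCount hK f x t) (t + 1) = k then 1 else 0

/-- The arm pulled at round `t ≥ 1` by the generalized UCB policy. -/
def ucbArm {K : ℕ} (hK : 0 < K) (f : Fin K → ℕ → ℝ) (x : Fin K → ℕ → ℝ) (t : ℕ) : Fin K :=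
  ucbArmAux hK f x (ucbCount hK f x (t - 1)) t

/-- The exploration function of the UCB(ρ) policy: `f_k(t) = ρ log t` for every arm. -/
def rhoLog {K : ℕ} (ρ : ℝ) : Fin K → ℕ → ℝ := fun _ t => ρ * Real.log t

/-- The reward table of the two-armed deterministic environment `θ = (δ_a, δ_b)`:
arm `0` always gives `a` and arm `1` always gives `b`. -/
def diracTable (a b : ℝ) : Fin 2 → ℕ → ℝ := fun k _ => if k = 0 then a else b

end Bandit
namespace Bandit

/-- `ν` is a valid bandit environment: each arm's reward distribution is a probability
measure on `[0,1]`. -/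
def IsEnv {K : ℕ} (ν : Fin K → Measure ℝ) : Prop :=
  ∀ k, IsProbabilityMeasure (ν k) ∧ ν k (Set.Icc 0 1) = 1

/-- The mean of a reward distribution. -/
def mean (ν : Measure ℝ) : ℝ := ∫ x, x ∂ν

/-- `μ* = max_k μ_k`, the best mean reward of the environment `ν`. -/
def bestMean {K : ℕ} (hK : 0 < K) (ν : Fin K → Measure ℝ) : ℝ :=
  Finset.univ.sup' ⟨⟨0, hK⟩, Finset.mem_univ _⟩ fun k => mean (ν k)

/-- `Δ_k = μ* - μ_k`, the optimality gap of arm `k` in the environment `ν`. -/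
def gap {K : ℕ} (hK : 0 < K) (ν : Fin K → Measure ℝ) (k : Fin K) : ℝ :=
  bestMean hK ν - mean (ν k)

/-- `X` is a reward table process on `(Ω, P)` for the environment `ν`: the random variables
`X k u` (the reward of the `(u+1)`-th pull of arm `k`) are mutually independent, take values
in `[0,1]`, and `X k u` has distribution `ν k` for every `u`. -/
def IsRewardTable {K : ℕ} {Ω : Type*} [MeasurableSpace Ω] (P : Measure Ω)
    (ν : Fin K → Measure ℝ) (X : Fin K → ℕ → Ω → ℝ) : Prop :=
  (∀ k u, Measurable (X k u)) ∧
  (∀ k u ω, X k u ω ∈ Set.Icc (0 : ℝ) 1) ∧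
  (∀ k u, Measure.map (X k u) P = ν k) ∧
  iIndepFun (fun p : Fin K × ℕ => X p.1 p.2) P

/-- `E_θ[T_k(n)]`, the expected number of pulls of arm `k` up to round `n`, for the
generalized UCB policy with exploration functions `f`. -/
def ucbExpCount {K : ℕ} (hK : 0 < K) (f : Fin K → ℕ → ℝ) {Ω : Type*} [MeasurableSpace Ω]
    (P : Measure Ω) (X : Fin K → ℕ → Ω → ℝ) (n : ℕ) (k : Fin K) : ℝ :=
  ∫ ω, (ucbCount hK f (fun j u => X j u ω) n k : ℝ) ∂P

/-- `E_θ[R_n] = ∑_k Δ_k E_θ[T_k(n)]`, the expected regret at horizon `n` of the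
generalized UCB policy with exploration functions `f` in the environment `ν`. -/
def ucbRegret {K : ℕ} (hK : 0 < K) (f : Fin K → ℕ → ℝ) {Ω : Type*} [MeasurableSpace Ω]
    (P : Measure Ω) (ν : Fin K → Measure ℝ) (X : Fin K → ℕ → Ω → ℝ) (n : ℕ) : ℝ :=
  ∑ k, gap hK ν k * ucbExpCount hK f P X n k

end Bandit
namespace Bandit

/-- The family `Θ_k` of sets of admissible reward distributions per arm, as in the paper:
each `Θ_k` consists of probability measures on `[0,1]` and contains every two-point
distribution `p δ_a + (1-p) δ_b` with `p, a, b ∈ [0,1]`. -/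
def Admissible {K : ℕ} (Θk : Fin K → Set (Measure ℝ)) : Prop :=
  (∀ k, ∀ ν ∈ Θk k, IsProbabilityMeasure ν ∧ ν (Set.Icc 0 1) = 1) ∧
  (∀ k, ∀ p a b : ℝ, p ∈ Set.Icc (0 : ℝ) 1 → a ∈ Set.Icc (0 : ℝ) 1 → b ∈ Set.Icc (0 : ℝ) 1 →
    ENNReal.ofReal p • Measure.dirac a + ENNReal.ofReal (1 - p) • Measure.dirac b ∈ Θk k)

/-- `Θ = Θ_1 × … × Θ_K`, the set of admissible environments. -/
def envSet {K : ℕ} (Θk : Fin K → Set (Measure ℝ)) : Set (Fin K → Measure ℝ) :=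
  {θ | ∀ k, θ k ∈ Θk k}

end Bandit
namespace Bandit

open Filter

variable {F : ℕ → ℝ} {x : Fin 2 → ℕ → ℝ}

local notation "hK2" => Nat.succ_pos 1

/-- abbreviation for the count with a common exploration function -/
def cnt (F : ℕ → ℝ) (x : Fin 2 → ℕ → ℝ) (t : ℕ) (k : Fin 2) : ℕ :=
  ucbCount hK2 (fun _ t => F t) x t k

lemma cnt_succ (t : ℕ) (k : Fin 2) :
    cnt F x (t + 1) k = cnt F x t k +
      if ucbArmAux hK2 (fun _ t => F t) x (fun j => cnt F x t j) (t + 1) = k then 1 else 0 := by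
  rfl

lemma cnt_sum (t : ℕ) : cnt F x t 0 + cnt F x t 1 = t := by
  induction t with
  | zero => rfl
  | succ t ih =>
    rw [cnt_succ, cnt_succ]
    rcases Fin.exists_fin_two.mp ⟨ucbArmAux hK2 (fun _ t => F t) x (fun j => cnt F x t j) (t+1), rfl⟩ with h | h
    all_goals simp [h] at *
    · omega
    · omega

lemma cnt_mono_succ (t : ℕ) (k : Fin 2) : cnt F x t k ≤ cnt F x (t + 1) k := by
  rw [cnt_succ]; omega

lemma cnt_mono {s t : ℕ} (h : s ≤ t) (k : Fin 2) : cnt F x s k ≤ cnt F x t k := by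
  induction t with
  | zero => have : s = 0 := by omega
            subst this; exact le_rfl
  | succ t ih =>
    rcases Nat.lt_or_ge s (t+1) with h' | h'
    · exact le_trans (ih (by omega)) (cnt_mono_succ t k)
    · have : s = t + 1 := by omega
      subst this; exact le_rfl

lemma cnt_le (t : ℕ) (k : Fin 2) : cnt F x t k ≤ t := by
  have := cnt_sum (F := F) (x := x) t
  rcases Fin.exists_fin_two.mp ⟨k, rfl⟩ with h | h <;> subst h <;> omega

lemma cnt_two (k : Fin 2) : cnt F x 2 k = 1 := by
  rcases Fin.exists_fin_two.mp ⟨k, rfl⟩ with h | h <;>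
    simp [h, cnt, ucbCount, ucbArmAux, Fin.ext_iff]

lemma cnt_pos {t : ℕ} (ht : 2 ≤ t) (k : Fin 2) : 1 ≤ cnt F x t k := by
  have := cnt_mono (F := F) (x := x) ht k
  rw [cnt_two] at this; omega

/-- the pull condition: if arm `k` is pulled at round `t+1 ≥ 3`, then its UCB index
dominates that of any other arm. -/
lemma pull_cond {t : ℕ} (ht : 2 ≤ t) {k : Fin 2}
    (hp : ucbArmAux hK2 (fun _ t => F t) x (fun j => cnt F x t j) (t + 1) = k) (j : Fin 2) :
    empMean (x j) (cnt F x t j) + Real.sqrt (F (t+1) / (cnt F x t j : ℝ)) ≤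
      empMean (x k) (cnt F x t k) + Real.sqrt (F (t+1) / (cnt F x t k : ℝ)) := by
  rw [ucbArmAux, dif_neg (by omega)] at hp
  rw [← hp]
  exact argmaxFin_spec hK2
    (fun j => empMean (x j) (cnt F x t j) + Real.sqrt (F (t+1) / (cnt F x t j : ℝ))) j

lemma empMean_mem_Icc {y : ℕ → ℝ} (hy : ∀ u, y u ∈ Set.Icc (0:ℝ) 1) (s : ℕ) :
    empMean y s ∈ Set.Icc (0:ℝ) 1 := by
  rcases Nat.eq_zero_or_pos s with rfl | hs
  · simp [empMean]
  simp only [empMean]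
  constructor
  · apply div_nonneg (Finset.sum_nonneg fun u _ => (hy u).1) (by positivity)
  · rw [div_le_one (by positivity)]
    calc ∑ u ∈ Finset.range s, y u ≤ ∑ u ∈ Finset.range s, 1 :=
          Finset.sum_le_sum fun u _ => (hy u).2
      _ = s := by simp

lemma cnt_sum' {k j : Fin 2} (hkj : k ≠ j) (t : ℕ) : cnt F x t k + cnt F x t j = t := by
  have h := cnt_sum (F := F) (x := x) t
  rcases Fin.exists_fin_two.mp ⟨k, rfl⟩ with hk | hk <;>
    rcases Fin.exists_fin_two.mp ⟨j, rfl⟩ with hj | hj <;>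
      subst hk <;> subst hj <;> simp at hkj <;> omega

/-- Uniform growth of the pull counts: if the exploration function tends to infinity
(sublinearly), then by a time depending only on `m`, every arm has been pulled
at least `m` times, uniformly over reward tables with values in `[0,1]`. -/
lemma growth (hF : Tendsto F atTop atTop)
    (hFo : Tendsto (fun t : ℕ => F t / t) atTop (nhds 0)) (m : ℕ) :
    ∃ τ : ℕ, 3 ≤ τ ∧ ∀ x : Fin 2 → ℕ → ℝ, (∀ k u, x k u ∈ Set.Icc (0:ℝ) 1) →
      ∀ t, τ ≤ t → ∀ k, m ≤ cnt F x t k := by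
  induction m with
  | zero => exact ⟨3, le_rfl, fun x hx t ht k => Nat.zero_le _⟩
  | succ m ih =>
    rcases Nat.eq_zero_or_pos m with rfl | hm
    · exact ⟨3, le_rfl, fun x hx t ht k => cnt_pos (by omega) k⟩
    obtain ⟨τm, hτm3, hτm⟩ := ih
    -- the eventual domination condition
    have e1 : ∀ᶠ t : ℕ in atTop, 0 ≤ F (t + 1) :=
      (hF.comp (tendsto_add_atTop_nat 1)).eventually_ge_atTop 0
    have hsq : Tendsto Real.sqrt atTop atTop := by
      apply tendsto_atTop_atTop.mpr
      intro b
      exact ⟨b ^ 2, fun a ha => by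
        calc b ≤ |b| := le_abs_self b
          _ = Real.sqrt (b ^ 2) := (Real.sqrt_sq_eq_abs b).symm
          _ ≤ Real.sqrt a := Real.sqrt_le_sqrt ha⟩
    have hA : Tendsto (fun t : ℕ => Real.sqrt (F (t + 1) / (m : ℝ))) atTop atTop :=
      hsq.comp (((hF.comp (tendsto_add_atTop_nat 1))).atTop_div_const
        (by positivity))
    have hB : Tendsto (fun t : ℕ => F (t + 1) / ((t : ℝ) - m)) atTop (nhds 0) := by
      have h2 : Tendsto (fun t : ℕ => 2 * (F (t + 1) / ((t:ℝ) + 1))) atTop (nhds 0) := by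
        have := (hFo.comp (tendsto_add_atTop_nat 1)).const_mul (2 : ℝ)
        simpa using this
      apply squeeze_zero' (g := fun t : ℕ => 2 * (F (t + 1) / ((t:ℝ) + 1)))
      · filter_upwards [e1, eventually_ge_atTop (m + 1)] with t h0 hm'
        have : (0:ℝ) < (t:ℝ) - m := by
          have : (m:ℝ) + 1 ≤ (t:ℝ) := by exact_mod_cast hm'
          linarith
        positivity
      · filter_upwards [e1, eventually_ge_atTop (2 * m + 1)] with t h0 hm'
        have h1 : ((t:ℝ) + 1) / 2 ≤ (t:ℝ) - m := by
          have : (2 * m + 1 : ℝ) ≤ (t:ℝ) := by exact_mod_cast hm'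
          have hm1 : (1:ℝ) ≤ (m:ℝ) := by exact_mod_cast hm
          linarith
        have hpos : (0:ℝ) < ((t:ℝ) + 1) / 2 := by positivity
        calc F (t+1) / ((t:ℝ) - m) ≤ F (t+1) / (((t:ℝ) + 1) / 2) :=
              div_le_div_of_nonneg_left h0 hpos h1
          _ = 2 * (F (t+1) / ((t:ℝ) + 1)) := by rw [div_div_eq_mul_div]; ring
      · exact h2
    have hBs : Tendsto (fun t : ℕ => Real.sqrt (F (t + 1) / ((t : ℝ) - m))) atTop
        (nhds 0) := by
      simpa using hB.sqrt
    have hev : ∀ᶠ t : ℕ in atTop, 0 ≤ F (t + 1) ∧ 2 * m + 1 ≤ t ∧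
        1 + Real.sqrt (F (t + 1) / ((t : ℝ) - m)) < Real.sqrt (F (t + 1) / (m : ℝ)) := by
      filter_upwards [e1, eventually_ge_atTop (2 * m + 1), hA.eventually_ge_atTop 3,
        hBs.eventually (gt_mem_nhds (by norm_num : (0:ℝ) < 1))] with t h0 h1 h3 h4
      exact ⟨h0, h1, by linarith⟩
    obtain ⟨σ₀, hσ₀⟩ := eventually_atTop.mp hev
    set σ := max (max τm 3) σ₀ with hσdef
    refine ⟨σ + m + 2, by omega, fun x hx t ht k => ?_⟩
    have hmono := cnt_mono (F := F) (x := x)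
      (show σ + m + 2 ≤ t from ht) k
    suffices h : m + 1 ≤ cnt F x (σ + m + 2) k by omega
    by_contra hcon
    push_neg at hcon
    -- at every round s+1 with σ ≤ s < σ + m + 2, arm k is pulled
    have step : ∀ s, σ ≤ s → s < σ + m + 2 → cnt F x (s + 1) k = cnt F x s k + 1 := by
      intro s hs1 hs2
      rw [cnt_succ]
      by_cases hAk : ucbArmAux hK2 (fun _ t => F t) x (fun j => cnt F x s j) (s + 1) = k
      · simp [hAk]
      exfalso
      set A := ucbArmAux hK2 (fun _ t => F t) x (fun j => cnt F x s j) (s + 1) with hA'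
      have hkA : k ≠ A := fun h => hAk h.symm
      obtain ⟨h0, h2m, hlt⟩ := hσ₀ s (le_trans (le_max_right _ _) hs1)
      have hs3 : 3 ≤ s := le_trans (le_trans (le_max_right _ _) (le_max_left _ _)) hs1
      have hpull := pull_cond (F := F) (x := x) (t := s) (by omega) hA'.symm k
      -- bounds on the counts
      have hTk_le : cnt F x s k ≤ m := by
        have h1 := cnt_mono (F := F) (x := x) (show s ≤ σ + m + 2 by omega) k
        omega
      have hTk_pos : 1 ≤ cnt F x s k := cnt_pos (by omega) k
      have hTA : cnt F x s k + cnt F x s A = s := cnt_sum' hkA s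
      have hTA_ge : (s : ℝ) - (m:ℝ) ≤ (cnt F x s A : ℝ) := by
        have h1 : s ≤ cnt F x s A + m := by omega
        have h2 : (s:ℝ) ≤ (cnt F x s A : ℝ) + m := by exact_mod_cast h1
        linarith
      have hTA_pos : (0:ℝ) < (cnt F x s A : ℝ) := by
        have := cnt_pos (F := F) (x := x) (show 2 ≤ s by omega) A
        exact_mod_cast this
      -- index of k is at least √(F(s+1)/m)
      have hik : Real.sqrt (F (s+1) / (m:ℝ)) ≤
          empMean (x k) (cnt F x s k) + Real.sqrt (F (s+1) / (cnt F x s k : ℝ)) := by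
        have h1 : F (s+1) / (m:ℝ) ≤ F (s+1) / (cnt F x s k : ℝ) := by
          apply div_le_div_of_nonneg_left h0 (by exact_mod_cast hTk_pos)
          exact_mod_cast hTk_le
        have h2 := (empMean_mem_Icc (hx k) (cnt F x s k)).1
        have := Real.sqrt_le_sqrt h1
        linarith
      -- index of A is at most 1 + √(F(s+1)/(s-m))
      have hiA : empMean (x A) (cnt F x s A) + Real.sqrt (F (s+1) / (cnt F x s A : ℝ)) ≤
          1 + Real.sqrt (F (s+1) / ((s:ℝ) - m)) := by
        have hsm : (0:ℝ) < (s:ℝ) - m := by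
          have : (2*m+1 : ℝ) ≤ (s:ℝ) := by exact_mod_cast h2m
          have : (1:ℝ) ≤ (m:ℝ) := by exact_mod_cast hm
          linarith
        have h1 : F (s+1) / (cnt F x s A : ℝ) ≤ F (s+1) / ((s:ℝ) - m) :=
          div_le_div_of_nonneg_left h0 hsm hTA_ge
        have h2 := (empMean_mem_Icc (hx A) (cnt F x s A)).2
        have := Real.sqrt_le_sqrt h1
        linarith
      linarith
    have grow : ∀ d : ℕ, d ≤ m + 2 → d ≤ cnt F x (σ + d) k := by
      intro d hd
      induction d with
      | zero => exact Nat.zero_le _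
      | succ d ihd =>
        have e : σ + (d+1) = (σ + d) + 1 := by omega
        rw [e]
        have h1 := step (σ + d) (by omega) (by omega)
        have h2 := ihd (by omega)
        omega
    have := grow (m+2) le_rfl
    have := cnt_mono (F := F) (x := x) (show σ + (m+2) ≤ σ + m + 2 by omega) k
    omega

/-- Key deterministic bound: if the empirical means are `ε`-accurate from sample size `s₀`
on, both counts have reached `s₀` by time `τ`, and arm `i` is `3ε`-suboptimal, then the
count of arm `i` grows at most like `F n / ε² + τ + 1`. -/
lemma count_bound (hF0 : ∀ t, 3 ≤ t → 0 ≤ F t)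
    (hFmono : ∀ s t, 2 ≤ s → s ≤ t → F s ≤ F t)
    {i j : Fin 2} (hij : i ≠ j) (μ : Fin 2 → ℝ) {ε : ℝ} (hε : 0 < ε)
    (hgap : μ i + 3 * ε ≤ μ j)
    (hx : ∀ k u, x k u ∈ Set.Icc (0:ℝ) 1)
    {s₀ τ : ℕ} (hτ3 : 3 ≤ τ)
    (hcnt : ∀ t, τ ≤ t → ∀ k, s₀ ≤ cnt F x t k)
    (hgood : ∀ k s, s₀ ≤ s → |empMean (x k) s - μ k| ≤ ε) :
    ∀ n, τ ≤ n → (cnt F x n i : ℝ) ≤ τ + F n / ε ^ 2 + 1 := by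
  intro n hn
  induction n, hn using Nat.le_induction with
  | base =>
    have h1 : (cnt F x τ i : ℝ) ≤ τ := by exact_mod_cast cnt_le (F := F) (x := x) τ i
    have h2 : 0 ≤ F τ / ε ^ 2 := div_nonneg (hF0 τ hτ3) (by positivity)
    linarith
  | succ n hn ih =>
    have hFn : F n ≤ F (n + 1) := hFmono n (n+1) (by omega) (by omega)
    have hstep : (cnt F x (n+1) i : ℕ) = cnt F x n i +
        if ucbArmAux hK2 (fun _ t => F t) x (fun j => cnt F x n j) (n + 1) = i
          then 1 else 0 := cnt_succ n i
    by_cases hp : ucbArmAux hK2 (fun _ t => F t) x (fun j => cnt F x n j) (n + 1) = i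
    · -- arm i was pulled: its index dominated arm j's index
      have hpull := pull_cond (F := F) (x := x) (t := n) (by omega) hp j
      have hTi_pos : 1 ≤ cnt F x n i := cnt_pos (by omega) i
      have hTi : s₀ ≤ cnt F x n i := hcnt n hn i
      have hTj : s₀ ≤ cnt F x n j := hcnt n hn j
      have hgi := hgood i _ hTi
      have hgj := hgood j _ hTj
      have h0 : 0 ≤ F (n+1) := hF0 (n+1) (by omega)
      have hzpos : (0:ℝ) ≤ F (n+1) / (cnt F x n i : ℝ) :=
        div_nonneg h0 (by exact_mod_cast Nat.zero_le _)
      have hsqj : 0 ≤ Real.sqrt (F (n+1) / (cnt F x n j : ℝ)) := Real.sqrt_nonneg _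
      have habs1 : μ j - ε ≤ empMean (x j) (cnt F x n j) := by
        have := abs_le.mp hgj
        linarith [this.1]
      have habs2 : empMean (x i) (cnt F x n i) ≤ μ i + ε := by
        have := abs_le.mp hgi
        linarith [this.2]
      have hsqrt : ε ≤ Real.sqrt (F (n+1) / (cnt F x n i : ℝ)) := by linarith
      have hsq : ε ^ 2 ≤ F (n+1) / (cnt F x n i : ℝ) := by
        have h1 : ε ^ 2 ≤ Real.sqrt (F (n+1) / (cnt F x n i : ℝ)) ^ 2 :=
          pow_le_pow_left₀ hε.le hsqrt 2
        rwa [Real.sq_sqrt hzpos] at h1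
      have hTi_le : (cnt F x n i : ℝ) ≤ F (n+1) / ε ^ 2 := by
        rw [le_div_iff₀ (by positivity)]
        have hTipos : (0:ℝ) < (cnt F x n i : ℝ) := by exact_mod_cast hTi_pos
        have h2 := (le_div_iff₀ hTipos).mp hsq
        nlinarith [h2]
      have : (cnt F x (n+1) i : ℝ) = (cnt F x n i : ℝ) + 1 := by
        rw [hstep, if_pos hp]; push_cast; ring
      rw [this]
      have hτ0 : (0:ℝ) ≤ (τ:ℕ) := Nat.cast_nonneg τ
      linarith
    · have : (cnt F x (n+1) i : ℝ) = (cnt F x n i : ℝ) := by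
        rw [hstep, if_neg hp]; push_cast; ring
      rw [this]
      have : F n / ε ^ 2 ≤ F (n+1) / ε ^ 2 := by
        apply div_le_div_of_nonneg_right hFn (by positivity)
      linarith

lemma empMean_const {c : ℝ} {s : ℕ} (hs : 1 ≤ s) : empMean (fun _ => c) s = c := by
  simp only [empMean, Finset.sum_const, Finset.card_range, nsmul_eq_mul]
  field_simp

lemma diracTable_zero (a b : ℝ) : diracTable a b 0 = fun _ => a := by
  funext u; simp [diracTable]

lemma diracTable_one (a b : ℝ) : diracTable a b 1 = fun _ => b := by
  funext u; simp [diracTable]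

/-- Deterministic-environment count bound: in `θ = (δ_a, δ_b)` with `b < a`, the count of
the suboptimal arm `1` satisfies `Δ² T₁(n) ≤ max Δ² (F n + Δ²)` for all `n ≥ 2`. -/
lemma dirac_count_bound (hF0 : ∀ t, 3 ≤ t → 0 ≤ F t)
    (hFmono : ∀ s t, 2 ≤ s → s ≤ t → F s ≤ F t)
    {a b : ℝ} (hba : b < a) :
    ∀ n, 2 ≤ n → (a - b) ^ 2 * (cnt F (diracTable a b) n 1 : ℝ) ≤
      max ((a - b) ^ 2) (F n + (a - b) ^ 2) := by
  intro n hn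
  set Δ := a - b with hΔdef
  have hΔ : 0 < Δ := by simp [hΔdef]; linarith
  induction n, hn using Nat.le_induction with
  | base =>
    rw [cnt_two]
    simpa using le_max_left (Δ ^ 2) (F 2 + Δ ^ 2)
  | succ n hn ih =>
    have hFn : F n ≤ F (n + 1) := hFmono n (n+1) (by omega) (by omega)
    have hmax : max (Δ ^ 2) (F n + Δ ^ 2) ≤ max (Δ ^ 2) (F (n+1) + Δ ^ 2) :=
      max_le_max le_rfl (by linarith)
    have hstep : (cnt F (diracTable a b) (n+1) 1 : ℕ) = cnt F (diracTable a b) n 1 +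
        if ucbArmAux hK2 (fun _ t => F t) (diracTable a b)
            (fun j => cnt F (diracTable a b) n j) (n + 1) = 1 then 1 else 0 := cnt_succ n 1
    by_cases hp : ucbArmAux hK2 (fun _ t => F t) (diracTable a b)
        (fun j => cnt F (diracTable a b) n j) (n + 1) = 1
    · have hpull := pull_cond (F := F) (x := diracTable a b) (t := n) (by omega) hp 0
      have hT0 : 1 ≤ cnt F (diracTable a b) n 0 := cnt_pos (by omega) 0
      have hT1 : 1 ≤ cnt F (diracTable a b) n 1 := cnt_pos (by omega) 1
      rw [diracTable_zero, diracTable_one, empMean_const hT0, empMean_const hT1] at hpull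
      have hsq0 : 0 ≤ Real.sqrt (F (n+1) / (cnt F (diracTable a b) n 0 : ℝ)) :=
        Real.sqrt_nonneg _
      have hsqrt : Δ ≤ Real.sqrt (F (n+1) / (cnt F (diracTable a b) n 1 : ℝ)) := by
        simp only [hΔdef]; linarith
      have hzpos : (0:ℝ) ≤ F (n+1) / (cnt F (diracTable a b) n 1 : ℝ) :=
        div_nonneg (hF0 (n+1) (by omega)) (by exact_mod_cast Nat.zero_le _)
      have hsq : Δ ^ 2 ≤ F (n+1) / (cnt F (diracTable a b) n 1 : ℝ) := by
        have h1 := pow_le_pow_left₀ hΔ.le hsqrt 2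
        rwa [Real.sq_sqrt hzpos] at h1
      have hT1pos : (0:ℝ) < (cnt F (diracTable a b) n 1 : ℝ) := by exact_mod_cast hT1
      have hmul : Δ ^ 2 * (cnt F (diracTable a b) n 1 : ℝ) ≤ F (n+1) := by
        have h2 := (le_div_iff₀ hT1pos).mp hsq
        nlinarith [h2]
      have hc : (cnt F (diracTable a b) (n+1) 1 : ℝ) =
          (cnt F (diracTable a b) n 1 : ℝ) + 1 := by
        rw [hstep, if_pos hp]; push_cast; ring
      rw [hc]
      have : Δ ^ 2 * ((cnt F (diracTable a b) n 1 : ℝ) + 1) ≤ F (n+1) + Δ ^ 2 := by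
        nlinarith [hmul]
      exact le_trans this (le_max_right _ _)
    · have hc : (cnt F (diracTable a b) (n+1) 1 : ℝ) =
          (cnt F (diracTable a b) n 1 : ℝ) := by
        rw [hstep, if_neg hp]; push_cast; ring
      rw [hc]
      exact le_trans ih hmax

section loglog

/-- `F = log ∘ log` of a natural number. -/
def llog (t : ℕ) : ℝ := Real.log (Real.log t)

lemma llog_nonneg {t : ℕ} (ht : 3 ≤ t) : 0 ≤ llog t := by
  have h3 : (3:ℝ) ≤ (t:ℝ) := by exact_mod_cast ht
  have h1 : (1:ℝ) ≤ Real.log t := by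
    have : Real.log 3 ≤ Real.log t := Real.log_le_log (by norm_num) h3
    have h3e : Real.exp 1 ≤ 3 := by
      have := Real.exp_one_lt_d9
      linarith
    have := Real.log_le_log (Real.exp_pos 1) h3e
    rw [Real.log_exp] at this
    linarith
  have := Real.log_nonneg h1
  exact this

lemma llog_mono {s t : ℕ} (hs : 2 ≤ s) (hst : s ≤ t) : llog s ≤ llog t := by
  have h2 : (2:ℝ) ≤ (s:ℝ) := by exact_mod_cast hs
  have hst' : (s:ℝ) ≤ (t:ℝ) := by exact_mod_cast hst
  have hls : 0 < Real.log s := Real.log_pos (by linarith)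
  have h1 : Real.log s ≤ Real.log t := Real.log_le_log (by linarith) hst'
  exact Real.log_le_log hls h1

lemma llog_tendsto : Tendsto llog atTop atTop := by
  have h1 : Tendsto (fun t : ℕ => (t:ℝ)) atTop atTop := tendsto_natCast_atTop_atTop
  exact Real.tendsto_log_atTop.comp (Real.tendsto_log_atTop.comp h1)

lemma llog_le_log {t : ℕ} (ht : 3 ≤ t) : llog t ≤ Real.log t := by
  have h3 : (3:ℝ) ≤ (t:ℝ) := by exact_mod_cast ht
  have hlt : 0 < Real.log t := Real.log_pos (by linarith)
  exact Real.log_le_log hlt (Real.log_le_self (by positivity))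

lemma llog_div_tendsto : Tendsto (fun t : ℕ => llog t / t) atTop (nhds 0) := by
  have hlog : Tendsto (fun t : ℕ => Real.log t / t) atTop (nhds 0) := by
    have h := Real.isLittleO_log_id_atTop.tendsto_div_nhds_zero
    exact h.comp tendsto_natCast_atTop_atTop
  apply squeeze_zero' (g := fun t : ℕ => Real.log t / t)
  · filter_upwards [eventually_ge_atTop 3] with t ht
    have hpos : (0:ℝ) < (t:ℝ) := by
      have : (3:ℝ) ≤ (t:ℝ) := by exact_mod_cast ht
      linarith
    exact div_nonneg (llog_nonneg ht) hpos.le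
  · filter_upwards [eventually_ge_atTop 3] with t ht
    have hpos : (0:ℝ) < (t:ℝ) := by
      have : (3:ℝ) ≤ (t:ℝ) := by exact_mod_cast ht
      linarith
    exact div_le_div_of_nonneg_right (llog_le_log ht) hpos.le
  · exact hlog

end loglog

section prob

open MeasureTheory ProbabilityTheory

lemma measurable_empMean {Ω : Type*} [MeasurableSpace Ω] {Y : ℕ → Ω → ℝ}
    (hY : ∀ u, Measurable (Y u)) (s : ℕ) :
    Measurable (fun ω => empMean (fun u => Y u ω) s) := by
  simp only [empMean]
  exact (Finset.measurable_sum _ (fun u _ => hY u)).div_const _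

/-- The expected pull count of a strictly suboptimal arm is `o(n)`. -/
lemma expCount_littleO {Ω : Type*} [MeasurableSpace Ω] (P : Measure Ω)
    [IsProbabilityMeasure P] (ν : Fin 2 → Measure ℝ) (X : Fin 2 → ℕ → Ω → ℝ)
    (hX : IsRewardTable P ν X) {i j : Fin 2} (hij : i ≠ j)
    (hlt : mean (ν i) < mean (ν j)) :
    (fun n : ℕ => ∫ ω, (cnt llog (fun k u => X k u ω) n i : ℝ) ∂P) =o[atTop]
      fun n : ℕ => (n : ℝ) := by
  obtain ⟨hmeas, hbdd, hmap, hind⟩ := hX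
  set μ : Fin 2 → ℝ := fun k => mean (ν k) with hμdef
  -- the strong law of large numbers for each arm
  have hInt : ∀ k u, Integrable (X k u) P := by
    intro k u
    refine (integrable_const (1:ℝ)).mono' (hmeas k u).aestronglyMeasurable ?_
    filter_upwards with ω
    have := hbdd k u ω
    rw [Real.norm_eq_abs, abs_le]
    exact ⟨by linarith [this.1], this.2⟩
  have hE : ∀ k, ∫ ω, X k 0 ω ∂P = μ k := by
    intro k
    show ∫ ω, X k 0 ω ∂P = mean (ν k)
    rw [mean, ← hmap k 0]
    exact (integral_map (hmeas k 0).aemeasurable aestronglyMeasurable_id).symm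
  have slln : ∀ᵐ ω ∂P, ∀ k : Fin 2,
      Tendsto (fun s => empMean (fun u => X k u ω) s) atTop (nhds (μ k)) := by
    rw [ae_all_iff]
    intro k
    have h := strong_law_ae_real (fun u => X k u) (hInt k 0)
      (fun u v huv => hind.indepFun (show ((k, u) : Fin 2 × ℕ) ≠ (k, v) by simp [huv]))
      (fun u => ⟨(hmeas k u).aemeasurable, (hmeas k 0).aemeasurable,
        by rw [hmap, hmap]⟩)
    rw [hE k] at h
    exact h
  -- the gap
  set ε : ℝ := (μ j - μ i) / 3 with hεdef
  have hε : 0 < ε := by rw [hεdef]; linarith [hlt]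
  have hgap : μ i + 3 * ε ≤ μ j := by rw [hεdef]; linarith
  -- the good events
  set G : ℕ → Set Ω := fun s₀ => {ω | ∀ k : Fin 2, ∀ s, s₀ ≤ s →
    |empMean (fun u => X k u ω) s - μ k| ≤ ε} with hGdef
  have hGm : ∀ s₀, MeasurableSet (G s₀) := by
    intro s₀
    have : G s₀ = ⋂ (k : Fin 2), ⋂ (s : ℕ), ⋂ (_ : s₀ ≤ s),
        {ω | |empMean (fun u => X k u ω) s - μ k| ≤ ε} := by
      ext ω; simp [hGdef]
    rw [this]
    refine MeasurableSet.iInter fun k => MeasurableSet.iInter fun s =>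
      MeasurableSet.iInter fun _ => ?_
    exact measurableSet_le (((measurable_empMean (fun u => hmeas k u) s).sub
      measurable_const).abs) measurable_const
  have hGc : Tendsto (fun s₀ => P (G s₀)ᶜ) atTop (nhds 0) := by
    have hanti : Antitone fun s₀ => (G s₀)ᶜ := by
      intro s₀ s₁ h
      apply Set.compl_subset_compl.mpr
      intro ω hω k s hs
      exact hω k s (le_trans h hs)
    have h := tendsto_measure_iInter_atTop
      (fun s₀ => ((hGm s₀).compl).nullMeasurableSet) hanti
      ⟨0, measure_ne_top P _⟩
    have hnull : P (⋂ s₀, (G s₀)ᶜ) = 0 := by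
      apply measure_mono_null _ (ae_iff.mp slln)
      intro ω hω
      simp only [Set.mem_iInter] at hω
      simp only [Set.mem_setOf_eq]
      intro hcon
      -- ω satisfies the convergence, so ω ∈ G s₀ for some s₀
      have : ∃ s₀, ω ∈ G s₀ := by
        have h0 := (hcon 0).eventually (Metric.closedBall_mem_nhds (μ 0) hε)
        have h1 := (hcon 1).eventually (Metric.closedBall_mem_nhds (μ 1) hε)
        obtain ⟨N0, hN0⟩ := eventually_atTop.mp h0
        obtain ⟨N1, hN1⟩ := eventually_atTop.mp h1
        refine ⟨max N0 N1, fun k s hs => ?_⟩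
        rcases Fin.exists_fin_two.mp ⟨k, rfl⟩ with hk | hk <;> subst hk
        · have := hN0 s (le_trans (le_max_left _ _) hs)
          simpa [Metric.mem_closedBall, Real.dist_eq] using this
        · have := hN1 s (le_trans (le_max_right _ _) hs)
          simpa [Metric.mem_closedBall, Real.dist_eq] using this
      obtain ⟨s₀, hs₀⟩ := this
      exact (hω s₀) hs₀
    rwa [hnull] at h
  -- main littleO estimate
  rw [Asymptotics.isLittleO_iff]
  intro c hc
  -- choose s₀ with P (G s₀)ᶜ small
  have hev : ∀ᶠ s₀ in atTop, P (G s₀)ᶜ < ENNReal.ofReal (c / 2) :=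
    hGc.eventually (gt_mem_nhds (by simp [ENNReal.ofReal_pos]; linarith))
  obtain ⟨s₀, hs₀⟩ := eventually_atTop.mp hev
  have hPG : (P (G s₀)ᶜ).toReal ≤ c / 2 :=
    ENNReal.toReal_le_of_le_ofReal (by linarith) (hs₀ s₀ le_rfl).le
  -- choose τ from the growth lemma
  obtain ⟨τ, hτ3, hτ⟩ := growth (F := llog) llog_tendsto llog_div_tendsto s₀
  -- the deterministic part of the majorant tends to 0 after division by n
  have hT : Tendsto (fun n : ℕ => ((τ:ℝ) + 1) / n + llog n / n * (1 / ε ^ 2)) atTop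
      (nhds 0) := by
    have h1 := tendsto_const_div_atTop_nhds_zero_nat ((τ:ℝ) + 1)
    have h2 := llog_div_tendsto.mul_const (1 / ε ^ 2)
    simpa using h1.add h2
  have hevT : ∀ᶠ n : ℕ in atTop, (τ:ℝ) + llog n / ε ^ 2 + 1 ≤ c / 2 * n := by
    filter_upwards [hT.eventually (gt_mem_nhds (half_pos hc)), eventually_ge_atTop 1]
      with n hn h1n
    have hnpos : (0:ℝ) < (n:ℝ) := by exact_mod_cast h1n
    have heq : (τ:ℝ) + llog n / ε ^ 2 + 1 =
        (((τ:ℝ) + 1) / n + llog n / n * (1 / ε ^ 2)) * n := by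
      field_simp
      ring
    rw [heq]
    exact mul_le_mul_of_nonneg_right hn.le hnpos.le
  filter_upwards [eventually_ge_atTop τ, hevT] with n hτn hE2
  -- the integral bound
  set g : Ω → ℝ := fun ω => (cnt llog (fun k u => X k u ω) n i : ℝ) with hgdef
  have hg0 : 0 ≤ ∫ ω, g ω ∂P := integral_nonneg fun ω => by positivity
  have hnn : ‖(n:ℝ)‖ = (n:ℝ) := Real.norm_of_nonneg (Nat.cast_nonneg n)
  rw [Real.norm_of_nonneg hg0, hnn]
  by_cases hIg : Integrable g P
  · set M : Ω → ℝ := fun ω => ((τ:ℝ) + llog n / ε ^ 2 + 1) +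
      ((G s₀)ᶜ).indicator (fun _ => (n:ℝ)) ω with hMdef
    have hle : ∀ ω, g ω ≤ M ω := by
      intro ω
      by_cases hω : ω ∈ G s₀
      · have hbound := count_bound (F := llog) (x := fun k u => X k u ω)
          (fun t ht => llog_nonneg ht) (fun s t hs hst => llog_mono hs hst)
          hij μ hε hgap (fun k u => hbdd k u ω) hτ3
          (fun t ht k => hτ (fun k u => X k u ω) (fun k u => hbdd k u ω) t ht k)
          (fun k s hs => hω k s hs) n hτn
        have hind0 : ((G s₀)ᶜ).indicator (fun _ => (n:ℝ)) ω = 0 :=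
          Set.indicator_of_notMem (by simpa using hω) _
        rw [hMdef]
        simp only [hind0, add_zero]
        exact hbound
      · have h1 : g ω ≤ (n:ℝ) :=
          Nat.cast_le.mpr (cnt_le (F := llog) (x := fun k u => X k u ω) n i)
        have hind1 : ((G s₀)ᶜ).indicator (fun _ => (n:ℝ)) ω = (n:ℝ) :=
          Set.indicator_of_mem (by simpa using hω) _
        have h2 : 0 ≤ (τ:ℝ) + llog n / ε ^ 2 + 1 := by
          have := llog_nonneg (show 3 ≤ n by omega)
          positivity
        rw [hMdef]
        simp only [hind1]
        linarith
    have hIM : Integrable M P :=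
      (integrable_const _).add ((integrable_const (n:ℝ)).indicator (hGm s₀).compl)
    have hintM : ∫ ω, M ω ∂P = ((τ:ℝ) + llog n / ε ^ 2 + 1) +
        (P (G s₀)ᶜ).toReal * n := by
      rw [hMdef]
      rw [integral_add (integrable_const _)
        ((integrable_const (n:ℝ)).indicator (hGm s₀).compl)]
      rw [integral_const, integral_indicator_const _ (hGm s₀).compl]
      simp [smul_eq_mul]
      left; rfl
    calc ∫ ω, g ω ∂P ≤ ∫ ω, M ω ∂P := integral_mono hIg hIM hle
      _ = ((τ:ℝ) + llog n / ε ^ 2 + 1) + (P (G s₀)ᶜ).toReal * n := hintM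
      _ ≤ c / 2 * n + c / 2 * n := by
          have : (P (G s₀)ᶜ).toReal * n ≤ c / 2 * n :=
            mul_le_mul_of_nonneg_right hPG (Nat.cast_nonneg n)
          linarith
      _ = c * n := by ring
  · rw [integral_undef hIg]
    positivity

lemma bestMean_two (ν : Fin 2 → Measure ℝ) :
    bestMean (Nat.succ_pos 1) ν = max (mean (ν 0)) (mean (ν 1)) := by
  apply le_antisymm
  · apply Finset.sup'_le
    intro k _
    rcases Fin.exists_fin_two.mp ⟨k, rfl⟩ with hk | hk <;> subst hk
    · exact le_max_left _ _
    · exact le_max_right _ _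
  · apply max_le
    · exact Finset.le_sup' (fun k => mean (ν k)) (Finset.mem_univ (0 : Fin 2))
    · exact Finset.le_sup' (fun k => mean (ν k)) (Finset.mem_univ (1 : Fin 2))

end prob

section final

open MeasureTheory ProbabilityTheory

lemma dirac_eventual_bound {a b : ℝ} (hb : 0 ≤ b) (hba : b < a) (ha : a ≤ 1) :
    ∀ n : ℕ, 1 ≤ llog n → 2 ≤ n →
      (a - b) * (cnt llog (diracTable a b) n 1 : ℝ) ≤ llog n / (a - b) + 1 := by
  intro n h1 h2
  have hΔ : 0 < a - b := sub_pos.mpr hba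
  have hΔ1 : a - b ≤ 1 := by linarith
  have hkeyn := dirac_count_bound (F := llog) (fun t ht => llog_nonneg ht)
    (fun s t hs hst => llog_mono hs hst) hba n h2
  have hmax : max ((a-b)^2) (llog n + (a-b)^2) = llog n + (a-b)^2 :=
    max_eq_right (by linarith)
  rw [hmax] at hkeyn
  have e2 : (a-b) * (cnt llog (diracTable a b) n 1 : ℝ) ≤ (llog n + (a-b)^2)/(a-b) := by
    rw [le_div_iff₀ hΔ]
    nlinarith [hkeyn]
  have e1 : (llog n + (a-b)^2)/(a-b) = llog n/(a-b) + (a-b) := by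
    field_simp
  rw [e1] at e2
  linarith

theorem ucb_loglog_main
    (Θk : Fin 2 → Set (Measure ℝ)) (hΘ : Admissible Θk) :
    (∀ θ ∈ envSet Θk,
      ∀ (Ω : Type) (_ : MeasurableSpace Ω) (P : Measure Ω)
        (X : Fin 2 → ℕ → Ω → ℝ), IsProbabilityMeasure P → IsRewardTable P θ X →
        (fun n : ℕ => ucbRegret (Nat.succ_pos 1) (fun _ t => Real.log (Real.log t)) P θ X n)
          =o[Filter.atTop] fun n : ℕ => (n : ℝ)) ∧
    (∀ a b : ℝ, 0 ≤ b → b < a → a ≤ 1 →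
      (∀ᶠ n : ℕ in Filter.atTop,
        (a - b) * (ucbCount (Nat.succ_pos 1) (fun _ t => Real.log (Real.log t))
            (diracTable a b) n 1 : ℝ) ≤
          Real.log (Real.log n) / (a - b) + 1) ∧
      (fun n : ℕ =>
          (a - b) * (ucbCount (Nat.succ_pos 1) (fun _ t => Real.log (Real.log t))
            (diracTable a b) n 1 : ℝ))
        =O[Filter.atTop] fun n : ℕ => Real.log (Real.log n)) := by
  constructor
  · -- Hannan consistency
    intro θ hθ Ω mΩ P X hP hX
    letI := mΩ
    haveI := hP
    have hsum : ∀ n : ℕ,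
        ucbRegret (Nat.succ_pos 1) (fun _ t => Real.log (Real.log t)) P θ X n =
          gap hK2 θ 0 * ucbExpCount hK2 (fun _ t => Real.log (Real.log t)) P X n 0 +
          gap hK2 θ 1 * ucbExpCount hK2 (fun _ t => Real.log (Real.log t)) P X n 1 := by
      intro n
      show (∑ k : Fin 2, gap hK2 θ k *
        ucbExpCount hK2 (fun _ t => Real.log (Real.log t)) P X n k) = _
      rw [Fin.sum_univ_two]
    rcases lt_trichotomy (mean (θ 0)) (mean (θ 1)) with h | h | h
    · have hg1 : gap hK2 θ 1 = 0 := by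
        rw [gap, bestMean_two, max_eq_right h.le, sub_self]
      have hg0 : gap hK2 θ 0 = mean (θ 1) - mean (θ 0) := by
        rw [gap, bestMean_two, max_eq_right h.le]
      have hO : (fun n : ℕ => ∫ ω, (cnt llog (fun k u => X k u ω) n 0 : ℝ) ∂P)
          =o[atTop] fun n : ℕ => (n : ℝ) :=
        expCount_littleO P θ X hX (by decide : (0 : Fin 2) ≠ 1) h
      have heq : (fun n : ℕ =>
          ucbRegret (Nat.succ_pos 1) (fun _ t => Real.log (Real.log t)) P θ X n) =
          fun n : ℕ => (mean (θ 1) - mean (θ 0)) *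
            ∫ ω, (cnt llog (fun k u => X k u ω) n 0 : ℝ) ∂P := by
        funext n
        rw [hsum n, hg0, hg1, zero_mul, add_zero]
        rfl
      rw [heq]
      exact hO.const_mul_left _
    · have hg0 : gap hK2 θ 0 = 0 := by
        rw [gap, bestMean_two, h, max_self, sub_self]
      have hg1 : gap hK2 θ 1 = 0 := by
        rw [gap, bestMean_two, h, max_self, sub_self]
      have heq : (fun n : ℕ =>
          ucbRegret (Nat.succ_pos 1) (fun _ t => Real.log (Real.log t)) P θ X n) =
          fun _ : ℕ => (0:ℝ) := by
        funext n
        rw [hsum n, hg0, hg1]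
        ring
      rw [heq]
      exact Asymptotics.isLittleO_zero _ _
    · have hg0 : gap hK2 θ 0 = 0 := by
        rw [gap, bestMean_two, max_eq_left h.le, sub_self]
      have hg1 : gap hK2 θ 1 = mean (θ 0) - mean (θ 1) := by
        rw [gap, bestMean_two, max_eq_left h.le]
      have hO : (fun n : ℕ => ∫ ω, (cnt llog (fun k u => X k u ω) n 1 : ℝ) ∂P)
          =o[atTop] fun n : ℕ => (n : ℝ) :=
        expCount_littleO P θ X hX (by decide : (1 : Fin 2) ≠ 0) h
      have heq : (fun n : ℕ =>
          ucbRegret (Nat.succ_pos 1) (fun _ t => Real.log (Real.log t)) P θ X n) =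
          fun n : ℕ => (mean (θ 0) - mean (θ 1)) *
            ∫ ω, (cnt llog (fun k u => X k u ω) n 1 : ℝ) ∂P := by
        funext n
        rw [hsum n, hg0, hg1, zero_mul, zero_add]
        rfl
      rw [heq]
      exact hO.const_mul_left _
  · -- loglog regret in deterministic environments
    intro a b hb hba ha
    have hΔ : 0 < a - b := sub_pos.mpr hba
    have hΔ1 : a - b ≤ 1 := by linarith
    constructor
    · filter_upwards [llog_tendsto.eventually_ge_atTop 1, eventually_ge_atTop 2]
        with n h1 h2
      exact dirac_eventual_bound hb hba ha n h1 h2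
    · rw [Asymptotics.isBigO_iff]
      refine ⟨1/(a-b) + 1, ?_⟩
      filter_upwards [llog_tendsto.eventually_ge_atTop 1, eventually_ge_atTop 2]
        with n h1 h2
      have hbnd := dirac_eventual_bound hb hba ha n h1 h2
      have hnorm1 : ‖Real.log (Real.log (n:ℕ))‖ = llog n :=
        Real.norm_of_nonneg (le_trans zero_le_one h1)
      have hpos : (0:ℝ) ≤ (a - b) * (cnt llog (diracTable a b) n 1 : ℝ) := by
        positivity
      have hnorm2 : ‖(a - b) * (cnt llog (diracTable a b) n 1 : ℝ)‖ =
          (a - b) * (cnt llog (diracTable a b) n 1 : ℝ) := Real.norm_of_nonneg hpos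
      show ‖(a - b) * (cnt llog (diracTable a b) n 1 : ℝ)‖ ≤
        (1/(a-b) + 1) * ‖Real.log (Real.log (n:ℕ))‖
      rw [hnorm1, hnorm2]
      have h4 : (1/(a-b) + 1) * llog n = llog n/(a-b) + llog n := by
        field_simp
      linarith

end final

end Bandit
namespace Bandit

/-- With K = 2 and f_1(n) = f_2(n) = log log n, the generalized UCB
policy is Hannan consistent (E_θ[R_n] = o(n) for every θ ∈ Θ), and yet in every environment
θ = (δ_a, δ_b) with 0 ≤ b < a ≤ 1 and Δ = a - b its expected regret satisfies
E_θ[R_n] ≤ (log log n)/Δ + 1, so E_θ[R_n] = O(log log n). In particular no logarithmic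
lower bound on expected regret holds uniformly over Θ for Hannan consistent policies. -/
theorem ucb_loglog_hannan_consistent_with_loglog_regret
    (Θk : Fin 2 → Set (Measure ℝ)) (hΘ : Admissible Θk) :
    (∀ θ ∈ envSet Θk,
      ∀ (Ω : Type) (_ : MeasurableSpace Ω) (P : Measure Ω)
        (X : Fin 2 → ℕ → Ω → ℝ), IsProbabilityMeasure P → IsRewardTable P θ X →
        (fun n : ℕ => ucbRegret (Nat.succ_pos 1) (fun _ t => Real.log (Real.log t)) P θ X n)
          =o[Filter.atTop] fun n : ℕ => (n : ℝ)) ∧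
    (∀ a b : ℝ, 0 ≤ b → b < a → a ≤ 1 →
      (∀ᶠ n : ℕ in Filter.atTop,
        (a - b) * (ucbCount (Nat.succ_pos 1) (fun _ t => Real.log (Real.log t))
            (diracTable a b) n 1 : ℝ) ≤
          Real.log (Real.log n) / (a - b) + 1) ∧
      (fun n : ℕ =>
          (a - b) * (ucbCount (Nat.succ_pos 1) (fun _ t => Real.log (Real.log t))
            (diracTable a b) n 1 : ℝ))
        =O[Filter.atTop] fun n : ℕ => Real.log (Real.log n)) :=
  ucb_loglog_main Θk hΘ

end Bandit
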